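/- Let V = V_1 ⊕ V_2 with V_1 = ℂv_0 one-dimensional and V_2 = ℂ-span{v_1,…,v_n}, let d: V → V act by d(v_0) = 0 and d(v_i) = v_i for i ≥ 1, and let Ř_i, Š_i be as in the Sakamoto–Shoji construction on V^{⊗k}. Then Ř_1⁻¹⋯Ř_{k-1}⁻¹ Š_{k-1}⋯Š_1 d_1 = d_1, i.e., the Sakamoto–Shoji operator Φ_P(X_1) equals the diagonal operator d_1 acting on the first tensor factor. -/
import Mathlib


/- `V = ℂ-span{v_0, v_1, …, v_n}`, where `v_0` spans `V_1` (degree 1) and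
`v_1, …, v_n` span `V_2` (degree 2).  We identify basis vectors of `V` with
elements of `Fin (n+1)` (`0` corresponds to `v_0`), and model `V^{⊗k}` via
coordinate functions on words. -/

/-- The gl(n+1) R-matrix operator `Ř_i` on the `i`-th and `(i+1)`-th factors. -/
noncomputable def Rword (n : ℕ) (q : ℂ) (i : ℕ) :
    ((ℕ → Fin (n+1)) → ℂ) → ((ℕ → Fin (n+1)) → ℂ) :=
  fun f w =>
    if w i = w (i+1) then q * f w
    else if w i < w (i+1) then f (w ∘ Equiv.swap i (i+1)) + (q - q⁻¹) * f w
    else f (w ∘ Equiv.swap i (i+1))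

/-- The inverse `Ř_i⁻¹ = Ř_i - (q - q⁻¹)`, from the quadratic relation. -/
noncomputable def RwordInv (n : ℕ) (q : ℂ) (i : ℕ) :
    ((ℕ → Fin (n+1)) → ℂ) → ((ℕ → Fin (n+1)) → ℂ) :=
  fun f => Rword n q i f - (q - q⁻¹) • f

/-- `Š_i`: acts as `Ř_i` when the two factors have the same degree
(both `v_0` or both in `V_2`), and as the flip otherwise. -/
noncomputable def Sword (n : ℕ) (q : ℂ) (i : ℕ) :
    ((ℕ → Fin (n+1)) → ℂ) → ((ℕ → Fin (n+1)) → ℂ) :=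
  fun f w =>
    if (w i = 0 ↔ w (i+1) = 0) then Rword n q i f w
    else f (w ∘ Equiv.swap i (i+1))

/-- `d_1`: the operator `d ⊗ id^{⊗(k-1)}` where `d(v_0) = 0` (`u_1 = 0`) and
`d(v_j) = v_j` for `j ≥ 1` (`u_2 = 1`). -/
def dOne (n : ℕ) : ((ℕ → Fin (n+1)) → ℂ) → ((ℕ → Fin (n+1)) → ℂ) :=
  fun f w => if w 1 = 0 then 0 else f w

/-- `ascComp F m = F 1 ∘ F 2 ∘ ⋯ ∘ F m`. -/
def ascComp {α : Type*} (F : ℕ → α → α) : ℕ → α → α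
  | 0 => id
  | m + 1 => ascComp F m ∘ F (m + 1)

/-- `descComp F m = F m ∘ F (m-1) ∘ ⋯ ∘ F 1`. -/
def descComp {α : Type*} (F : ℕ → α → α) : ℕ → α → α
  | 0 => id
  | m + 1 => F (m + 1) ∘ descComp F m


lemma swap_swap_comp {β : Type*} (w : ℕ → β) (i j : ℕ) :
    (w ∘ ⇑(Equiv.swap i j)) ∘ ⇑(Equiv.swap i j) = w := by
  funext x; simp [Function.comp, Equiv.swap_apply_self]

lemma Rword_apply_eq (n : ℕ) (q : ℂ) (i : ℕ) (f : (ℕ → Fin (n+1)) → ℂ)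
    (w : ℕ → Fin (n+1)) (h : w i = w (i+1)) : Rword n q i f w = q * f w := by
  simp only [Rword]; rw [if_pos h]

lemma Rword_apply_lt (n : ℕ) (q : ℂ) (i : ℕ) (f : (ℕ → Fin (n+1)) → ℂ)
    (w : ℕ → Fin (n+1)) (h : w i < w (i+1)) :
    Rword n q i f w = f (w ∘ Equiv.swap i (i+1)) + (q - q⁻¹) * f w := by
  simp only [Rword]; rw [if_neg (ne_of_lt h), if_pos h]

lemma Rword_apply_gt (n : ℕ) (q : ℂ) (i : ℕ) (f : (ℕ → Fin (n+1)) → ℂ)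
    (w : ℕ → Fin (n+1)) (h : w (i+1) < w i) :
    Rword n q i f w = f (w ∘ Equiv.swap i (i+1)) := by
  simp only [Rword]; rw [if_neg (ne_of_lt h).symm, if_neg (not_lt_of_gt h)]

lemma RInv_R (n : ℕ) (q : ℂ) (hq : q ≠ 0) (i : ℕ) (f : (ℕ → Fin (n+1)) → ℂ) :
    RwordInv n q i (Rword n q i f) = f := by
  funext w
  have hswap : (w ∘ ⇑(Equiv.swap i (i+1))) ∘ ⇑(Equiv.swap i (i+1)) = w :=
    swap_swap_comp w i (i+1)
  have hs0 : (w ∘ ⇑(Equiv.swap i (i+1))) i = w (i+1) := by simp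
  have hs1 : (w ∘ ⇑(Equiv.swap i (i+1))) (i+1) = w i := by simp
  simp only [RwordInv, Pi.sub_apply, Pi.smul_apply, smul_eq_mul]
  rcases lt_trichotomy (w i) (w (i+1)) with h | h | h
  · rw [Rword_apply_lt n q i _ w h,
      Rword_apply_gt n q i f _ (by rw [hs0, hs1]; exact h),
      hswap, Rword_apply_lt n q i f w h]
    ring
  · rw [Rword_apply_eq n q i _ w h, Rword_apply_eq n q i f w h]
    field_simp
    ring
  · rw [Rword_apply_gt n q i _ w h,
      Rword_apply_lt n q i f _ (by rw [hs0, hs1]; exact h),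
      hswap, Rword_apply_gt n q i f w h]
    ring

lemma S_eq_R (n : ℕ) (q : ℂ) (i : ℕ) (f : (ℕ → Fin (n+1)) → ℂ)
    (hf : ∀ w, w i = 0 → f w = 0) :
    Sword n q i f = Rword n q i f := by
  funext w
  simp only [Sword]
  by_cases h : (w i = 0 ↔ w (i+1) = 0)
  · rw [if_pos h]
  · rw [if_neg h]
    by_cases h0 : w i = 0
    · have h1 : w (i+1) ≠ 0 := fun he => h ⟨fun _ => he, fun _ => h0⟩
      have hlt : w i < w (i+1) := by
        rw [h0]; exact Fin.pos_iff_ne_zero.mpr h1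
      rw [Rword_apply_lt n q i f w hlt, hf w h0]
      ring
    · have h1 : w (i+1) = 0 := by
        by_contra h1; exact h ⟨fun a => absurd a h0, fun a => absurd a h1⟩
      have hgt : w (i+1) < w i := by
        rw [h1]; exact Fin.pos_iff_ne_zero.mpr h0
      rw [Rword_apply_gt n q i f w hgt]

lemma R_shift (n : ℕ) (q : ℂ) (i : ℕ) (f : (ℕ → Fin (n+1)) → ℂ)
    (hf : ∀ w, w i = 0 → f w = 0) :
    ∀ w, w (i+1) = 0 → Rword n q i f w = 0 := by
  intro w hw
  by_cases h : w i = w (i+1)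
  · rw [Rword_apply_eq n q i f w h, hf w (h.trans hw), mul_zero]
  · have hgt : w (i+1) < w i := by
      rw [hw]; exact Fin.pos_iff_ne_zero.mpr (fun he => h (he.trans hw.symm))
    rw [Rword_apply_gt n q i f w hgt]
    apply hf
    simp [hw]

lemma desc_S_eq_R (n : ℕ) (q : ℂ) (h : (ℕ → Fin (n+1)) → ℂ)
    (hv : ∀ w, w 1 = 0 → h w = 0) :
    ∀ m, descComp (Sword n q) m h = descComp (Rword n q) m h ∧
      (∀ w, w (m+1) = 0 → descComp (Rword n q) m h w = 0)
  | 0 => ⟨rfl, hv⟩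
  | m+1 => by
      obtain ⟨h1, h2⟩ := desc_S_eq_R n q h hv m
      refine ⟨?_, fun w hw => R_shift n q (m+1) _ h2 w hw⟩
      show Sword n q (m+1) (descComp (Sword n q) m h) = _
      rw [h1, S_eq_R n q (m+1) _ h2]
      rfl

lemma asc_desc (n : ℕ) (q : ℂ) (hq : q ≠ 0) (f : (ℕ → Fin (n+1)) → ℂ) :
    ∀ m, ascComp (RwordInv n q) m (descComp (Rword n q) m f) = f
  | 0 => rfl
  | m+1 => by
      show ascComp (RwordInv n q) m
        (RwordInv n q (m+1) (Rword n q (m+1) (descComp (Rword n q) m f))) = f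
      rw [RInv_R n q hq, asc_desc n q hq f m]

/-- The Sakamoto–Shoji operator
`Φ_P(X_1) = Ř_1⁻¹ ⋯ Ř_{k-1}⁻¹ Š_{k-1} ⋯ Š_1 d_1` equals `d_1`. -/
theorem stmt17 (n k : ℕ) (q : ℂ) (hq : q ≠ 0) :
    ascComp (RwordInv n q) (k - 1) ∘ descComp (Sword n q) (k - 1) ∘ dOne n
      = dOne n := by
  funext f
  simp only [Function.comp_apply]
  have hv : ∀ w, w 1 = 0 → dOne n f w = 0 := fun w hw => by simp [dOne, hw]
  rw [(desc_S_eq_R n q (dOne n f) hv (k-1)).1, asc_desc n q hq (dOne n f) (k-1)]
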